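/- For all positive integers m and n, let Θ : Fin m → M₃(ℝ) with each Θ(x) in the convex hull of the 24 extremal states {Ω₀, …, Ω₂₃}, and let F : Fin n → M₃(ℝ) with each F(y) a nonnegative linear combination of the 16 factorized extremal normalized effects {E₀, …, E₁₅} and \sum_y F(y) = Ē. Then the m×n matrix p with p_{x,y} = Tr(F(y)ᵀ Θ(x)) belongs to C(m,n,4). In other words, the PR Model (which includes all entangled states but only factorized effects) satisfies the no-hypersignaling principle: its bipartite signaling dimension is at most 4. -/

import Mathlib

open Matrix

/-- The four extremal states of the squit. -/
noncomputable def ws : Fin 4 → (Fin 3 → ℝ) :=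
  ![![1, 0, 1], ![0, 1, 1], ![-1, 0, 1], ![0, -1, 1]]

/-- The four extremal normalized effects of the squit. -/
noncomputable def es : Fin 4 → (Fin 3 → ℝ) :=
  ![![1, 1, 1], ![-1, 1, 1], ![-1, -1, 1], ![1, -1, 1]]

/-- The eight entangled extremal bipartite states `Ω₁₆, …, Ω₂₃`. -/
noncomputable def OmegaEnt : Fin 8 → Matrix (Fin 3) (Fin 3) ℝ :=
  ![(1/2 : ℝ) • Matrix.of ![![-1, 1, 0], ![1, 1, 0], ![0, 0, 2]],
    (1/2 : ℝ) • Matrix.of ![![-1, -1, 0], ![-1, 1, 0], ![0, 0, 2]],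
    (1/2 : ℝ) • Matrix.of ![![1, -1, 0], ![-1, -1, 0], ![0, 0, 2]],
    (1/2 : ℝ) • Matrix.of ![![1, 1, 0], ![1, -1, 0], ![0, 0, 2]],
    (1/2 : ℝ) • Matrix.of ![![-1, -1, 0], ![1, -1, 0], ![0, 0, 2]],
    (1/2 : ℝ) • Matrix.of ![![1, -1, 0], ![1, 1, 0], ![0, 0, 2]],
    (1/2 : ℝ) • Matrix.of ![![1, 1, 0], ![-1, 1, 0], ![0, 0, 2]],
    (1/2 : ℝ) • Matrix.of ![![-1, 1, 0], ![-1, -1, 0], ![0, 0, 2]]]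

/-- The eight entangled extremal bipartite normalized effects `E₁₆, …, E₂₃`. -/
noncomputable def EEnt : Fin 8 → Matrix (Fin 3) (Fin 3) ℝ :=
  ![Matrix.of ![![-1, 1, 0], ![1, 1, 0], ![0, 0, 1]],
    Matrix.of ![![-1, -1, 0], ![-1, 1, 0], ![0, 0, 1]],
    Matrix.of ![![1, -1, 0], ![-1, -1, 0], ![0, 0, 1]],
    Matrix.of ![![1, 1, 0], ![1, -1, 0], ![0, 0, 1]],
    Matrix.of ![![-1, 1, 0], ![-1, -1, 0], ![0, 0, 1]],
    Matrix.of ![![1, 1, 0], ![-1, 1, 0], ![0, 0, 1]],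
    Matrix.of ![![1, -1, 0], ![1, 1, 0], ![0, 0, 1]],
    Matrix.of ![![-1, -1, 0], ![1, -1, 0], ![0, 0, 1]]]

/-- The 24 extremal bipartite states `Ω₀, …, Ω₂₃`: the 16 factorized states
`Ω_{4i+j} = ω_i ω_jᵀ` followed by the 8 entangled ones. -/
noncomputable def Omegas : Fin 24 → Matrix (Fin 3) (Fin 3) ℝ := fun x =>
  if h : (x : ℕ) < 16 then
    Matrix.vecMulVec (ws ⟨(x : ℕ) / 4, by omega⟩) (ws ⟨(x : ℕ) % 4, by omega⟩)
  else OmegaEnt ⟨(x : ℕ) - 16, by have := x.isLt; omega⟩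

/-- The 24 extremal bipartite normalized effects `E₀, …, E₂₃`: the 16 factorized
effects `E_{4i+j} = e_i e_jᵀ` followed by the 8 entangled ones. -/
noncomputable def Effs : Fin 24 → Matrix (Fin 3) (Fin 3) ℝ := fun x =>
  if h : (x : ℕ) < 16 then
    Matrix.vecMulVec (es ⟨(x : ℕ) / 4, by omega⟩) (es ⟨(x : ℕ) % 4, by omega⟩)
  else EEnt ⟨(x : ℕ) - 16, by have := x.isLt; omega⟩

/-- The bipartite unit effect `Ē = ē ēᵀ` with `ē = (0,0,1)`. -/
noncomputable def Ebar : Matrix (Fin 3) (Fin 3) ℝ :=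
  Matrix.vecMulVec ![0, 0, 1] ![0, 0, 1]

/-- `V m n d` : the set of `m × n` real matrices with all entries in `{0,1}`,
each row summing to `1`, and with at most `d` nonzero columns. -/
def V (m n d : ℕ) : Set (Matrix (Fin m) (Fin n) ℝ) :=
  {p | (∀ x y, p x y = 0 ∨ p x y = 1) ∧ (∀ x, ∑ y, p x y = 1) ∧
       ({y : Fin n | ∃ x, p x y ≠ 0}).ncard ≤ d}

/-- `C m n d` : the convex hull of `V m n d`. -/
def C (m n d : ℕ) : Set (Matrix (Fin m) (Fin n) ℝ) := convexHull ℝ (V m n d)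

set_option maxHeartbeats 2000000

lemma sq_decomp {k00 k01 k10 k11 : ℝ} (h00 : 0 ≤ k00) (h01 : 0 ≤ k01) (h10 : 0 ≤ k10)
    (h11 : 0 ≤ k11) (hb : k00 + k11 = k01 + k10) :
    ∃ a p q b : ℝ, 0 ≤ a ∧ 0 ≤ p ∧ 0 ≤ q ∧ 0 ≤ b ∧
      k00 = a + p ∧ k01 = a + q ∧ k10 = b + p ∧ k11 = b + q := by
  rcases le_total k00 k01 with h | h
  · exact ⟨k00, 0, k01 - k00, k10, h00, le_refl 0, by linarith, h10, by ring, by ring, by ring,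
      by linarith⟩
  · exact ⟨k01, k00 - k01, 0, k11, h01, by linarith, le_refl 0, h11, by ring, by ring,
      by linarith, by ring⟩

lemma trace_vecMulVec (a b : Fin 3 → ℝ) (M : Matrix (Fin 3) (Fin 3) ℝ) :
    Matrix.trace ((Matrix.vecMulVec a b)ᵀ * M) = a ⬝ᵥ M.mulVec b := by
  simp only [Matrix.trace, Matrix.diag_apply, Matrix.mul_apply, Matrix.transpose_apply,
    Matrix.vecMulVec_apply, dotProduct, Matrix.mulVec, Finset.mul_sum]
  rw [Finset.sum_comm]
  exact Finset.sum_congr rfl fun l _ => Finset.sum_congr rfl fun k _ => by ring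

lemma dot_vecMulVec (c a b d : Fin 3 → ℝ) :
    c ⬝ᵥ (Matrix.vecMulVec a b).mulVec d = (c ⬝ᵥ a) * (b ⬝ᵥ d) := by
  simp only [dotProduct, Matrix.mulVec, Matrix.vecMulVec_apply, Finset.mul_sum,
    Finset.sum_mul]
  rw [Finset.sum_comm]
  exact Finset.sum_congr rfl fun k _ => Finset.sum_congr rfl fun l _ => by ring

lemma marg {ι κ : Type*} [Fintype ι] [Fintype κ] [DecidableEq ι] (f : ι → κ → ℝ)
    (hf : ∀ i, ∑ j, f i j = 1) (x0 : ι) (φ : κ → ℝ) :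
    ∑ g : ι → κ, (∏ i, f i (g i)) * φ (g x0) = ∑ j, f x0 j * φ j := by
  classical
  calc ∑ g : ι → κ, (∏ i, f i (g i)) * φ (g x0)
      = ∑ g : ι → κ, ∏ i, (if i = x0 then f i (g i) * φ (g i) else f i (g i)) := by
        refine Finset.sum_congr rfl fun g _ => ?_
        have h1 : ∀ i, (if i = x0 then f i (g i) * φ (g i) else f i (g i))
            = f i (g i) * (if i = x0 then φ (g i) else 1) := by
          intro i; split_ifs <;> ring
        simp only [h1, Finset.prod_mul_distrib]
        rw [Finset.prod_ite_eq' Finset.univ x0 (fun i => φ (g i))]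
        simp
      _ = ∏ i, ∑ j, (if i = x0 then f i j * φ j else f i j) :=
        (Fintype.prod_sum (fun i j => if i = x0 then f i j * φ j else f i j)).symm
      _ = ∑ j, f x0 j * φ j := by
        have h2 : ∀ i, (∑ j, if i = x0 then f i j * φ j else f i j)
            = (if i = x0 then ∑ j, f x0 j * φ j else 1) := by
          intro i; by_cases h : i = x0 <;> simp [h, hf i]
        simp only [h2]
        rw [Finset.prod_ite_eq' Finset.univ x0 (fun _ => ∑ j, f x0 j * φ j)]
        simp

lemma esws_nonneg (i p : Fin 4) : 0 ≤ es i ⬝ᵥ ws p := by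
  fin_cases i <;> fin_cases p <;> norm_num [es, ws, dotProduct, Fin.sum_univ_three, Matrix.cons_val_two, Matrix.vecHead, Matrix.vecTail]

lemma wses_nonneg (p j : Fin 4) : 0 ≤ ws p ⬝ᵥ es j := by
  fin_cases p <;> fin_cases j <;> norm_num [es, ws, dotProduct, Fin.sum_univ_three, Matrix.cons_val_two, Matrix.vecHead, Matrix.vecTail]

lemma ent_nonneg (t : Fin 8) (i j : Fin 4) : 0 ≤ es i ⬝ᵥ (OmegaEnt t).mulVec (es j) := by
  fin_cases t <;> fin_cases i <;> fin_cases j <;>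
    norm_num [OmegaEnt, es, dotProduct, Matrix.mulVec, Fin.sum_univ_three, Matrix.cons_val_two, Matrix.vecHead, Matrix.vecTail]

lemma quad_nonneg_hull {z : Matrix (Fin 3) (Fin 3) ℝ}
    (hz : z ∈ convexHull ℝ (Set.range Omegas)) (i j : Fin 4) :
    0 ≤ es i ⬝ᵥ z.mulVec (es j) := by
  have hconv : Convex ℝ {M : Matrix (Fin 3) (Fin 3) ℝ | 0 ≤ es i ⬝ᵥ M.mulVec (es j)} := by
    intro M hM N hN a b ha hb hab
    simp only [Set.mem_setOf_eq] at hM hN ⊢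
    have hlin : es i ⬝ᵥ (a • M + b • N).mulVec (es j)
        = a * (es i ⬝ᵥ M.mulVec (es j)) + b * (es i ⬝ᵥ N.mulVec (es j)) := by
      simp [Matrix.add_mulVec, Matrix.smul_mulVec, dotProduct_add, dotProduct_smul,
        smul_eq_mul]
    rw [hlin]
    exact add_nonneg (mul_nonneg ha hM) (mul_nonneg hb hN)
  refine convexHull_min ?_ hconv hz
  rintro M ⟨s, rfl⟩
  show 0 ≤ es i ⬝ᵥ (Omegas s).mulVec (es j)
  unfold Omegas
  split_ifs with h
  · rw [dot_vecMulVec]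
    exact mul_nonneg (esws_nonneg _ _) (wses_nonneg _ _)
  · exact ent_nonneg _ i j

lemma ebar_one_hull {z : Matrix (Fin 3) (Fin 3) ℝ}
    (hz : z ∈ convexHull ℝ (Set.range Omegas)) :
    (![0,0,1] : Fin 3 → ℝ) ⬝ᵥ z.mulVec ![0,0,1] = 1 := by
  have hconv : Convex ℝ {M : Matrix (Fin 3) (Fin 3) ℝ |
      (![0,0,1] : Fin 3 → ℝ) ⬝ᵥ M.mulVec ![0,0,1] = 1} := by
    intro M hM N hN a b ha hb hab
    simp only [Set.mem_setOf_eq] at hM hN ⊢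
    have hlin : (![0,0,1] : Fin 3 → ℝ) ⬝ᵥ (a • M + b • N).mulVec ![0,0,1]
        = a * ((![0,0,1] : Fin 3 → ℝ) ⬝ᵥ M.mulVec ![0,0,1])
          + b * ((![0,0,1] : Fin 3 → ℝ) ⬝ᵥ N.mulVec ![0,0,1]) := by
      simp [Matrix.add_mulVec, Matrix.smul_mulVec, dotProduct_add, dotProduct_smul,
        smul_eq_mul]
    rw [hlin, hM, hN]; linarith
  refine convexHull_min ?_ hconv hz
  rintro M ⟨s, rfl⟩
  show (![0,0,1] : Fin 3 → ℝ) ⬝ᵥ (Omegas s).mulVec ![0,0,1] = 1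
  unfold Omegas
  split_ifs with h
  · rw [dot_vecMulVec]
    have h1 : ∀ p : Fin 4, (![0,0,1] : Fin 3 → ℝ) ⬝ᵥ ws p = 1 := by
      intro p; fin_cases p <;> norm_num [ws, dotProduct, Fin.sum_univ_three, Matrix.cons_val_two, Matrix.vecHead, Matrix.vecTail]
    have h2 : ∀ p : Fin 4, ws p ⬝ᵥ (![0,0,1] : Fin 3 → ℝ) = 1 := by
      intro p; fin_cases p <;> norm_num [ws, dotProduct, Fin.sum_univ_three, Matrix.cons_val_two, Matrix.vecHead, Matrix.vecTail]
    rw [h1, h2, mul_one]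
  · generalize (⟨(s:ℕ)-16, by have := s.isLt; omega⟩ : Fin 8) = t
    fin_cases t <;> norm_num [OmegaEnt, dotProduct, Matrix.mulVec, Fin.sum_univ_three, Matrix.cons_val_two, Matrix.vecHead, Matrix.vecTail]

def sigv : Fin 12 → Fin 4 → Fin 4 × Fin 4 :=
  ![![(0,0),(0,2),(2,0),(2,2)], ![(0,3),(0,1),(2,3),(2,1)],
    ![(3,0),(3,2),(1,0),(1,2)], ![(3,3),(3,1),(1,3),(1,1)],
    ![(0,0),(0,2),(2,3),(2,1)], ![(2,0),(2,2),(0,3),(0,1)],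
    ![(3,0),(3,2),(1,3),(1,1)], ![(1,0),(1,2),(3,3),(3,1)],
    ![(0,0),(2,0),(3,2),(1,2)], ![(0,2),(2,2),(3,0),(1,0)],
    ![(0,3),(2,3),(3,1),(1,1)], ![(0,1),(2,1),(3,3),(1,3)]]

noncomputable def Vm (v : Fin 12) (i j : Fin 4) : ℝ :=
  ∑ k : Fin 4, if sigv v k = (i, j) then (4⁻¹ : ℝ) else 0

lemma Vm_sum {E : Type*} [AddCommMonoid E] [Module ℝ E] (v : Fin 12) (g : Fin 4 → Fin 4 → E) :
    ∑ i, ∑ j, Vm v i j • g i j = ∑ k : Fin 4, (4⁻¹ : ℝ) • g (sigv v k).1 (sigv v k).2 := by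
  simp only [Vm, Finset.sum_smul, ite_smul, zero_smul]
  calc ∑ i : Fin 4, ∑ j : Fin 4, ∑ k : Fin 4,
        (if sigv v k = (i, j) then (4⁻¹ : ℝ) • g i j else 0)
      = ∑ i : Fin 4, ∑ k : Fin 4, ∑ j : Fin 4,
        (if sigv v k = (i, j) then (4⁻¹ : ℝ) • g i j else 0) :=
        Finset.sum_congr rfl fun i _ => Finset.sum_comm
    _ = ∑ k : Fin 4, ∑ i : Fin 4, ∑ j : Fin 4,
        (if sigv v k = (i, j) then (4⁻¹ : ℝ) • g i j else 0) := Finset.sum_comm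
    _ = ∑ k : Fin 4, (4⁻¹ : ℝ) • g (sigv v k).1 (sigv v k).2 := by
        refine Finset.sum_congr rfl fun k _ => ?_
        rcases h : sigv v k with ⟨p1, p2⟩
        simp [Prod.mk.injEq, ite_and, Finset.sum_ite_eq]

lemma sigv_meas (v : Fin 12) :
    ∑ k : Fin 4, (4⁻¹ : ℝ) • Matrix.vecMulVec (es (sigv v k).1) (es (sigv v k).2) = Ebar := by
  fin_cases v <;>
    · ext a b
      fin_cases a <;> fin_cases b <;>
        norm_num [sigv, es, Ebar, Matrix.vecMulVec_apply, Fin.sum_univ_four,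
          Matrix.sum_apply, Matrix.smul_apply, Matrix.vecHead, Matrix.vecTail, Matrix.cons_val_two,
            Matrix.cons_val_three]

lemma decomp (c : Fin 4 → Fin 4 → ℝ) (hc : ∀ i j, 0 ≤ c i j)
    (hC : ∑ i : Fin 4, ∑ j : Fin 4, c i j • Matrix.vecMulVec (es i) (es j) = Ebar) :
    ∃ w : Fin 12 → ℝ, (∀ v, 0 ≤ w v) ∧ (∑ v, w v = 1) ∧
      (∀ i j, c i j = ∑ v, w v * Vm v i j) := by
  have key : ∀ k l : Fin 3, ∑ i : Fin 4, ∑ j : Fin 4, c i j * (es i k * es j l) = Ebar k l := by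
    intro k l
    have h := congrFun (congrFun hC k) l
    simpa [Matrix.sum_apply, Matrix.smul_apply, Matrix.vecMulVec_apply, smul_eq_mul,
      mul_assoc] using h
  have e00 := key 0 0
  have e01 := key 0 1
  have e02 := key 0 2
  have e10 := key 1 0
  have e11 := key 1 1
  have e12 := key 1 2
  have e20 := key 2 0
  have e21 := key 2 1
  have e22 := key 2 2
  norm_num only [Fin.sum_univ_four,
    show es 0 0 = 1 from rfl, show es 0 1 = 1 from rfl, show es 0 2 = 1 from rfl,
    show es 1 0 = -1 from rfl, show es 1 1 = 1 from rfl, show es 1 2 = 1 from rfl,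
    show es 2 0 = -1 from rfl, show es 2 1 = -1 from rfl, show es 2 2 = 1 from rfl,
    show es 3 0 = 1 from rfl, show es 3 1 = -1 from rfl, show es 3 2 = 1 from rfl,
    show Ebar 0 0 = 0 from by norm_num [Ebar, Matrix.vecMulVec_apply],
    show Ebar 0 1 = 0 from by norm_num [Ebar, Matrix.vecMulVec_apply],
    show Ebar 0 2 = 0 from by norm_num [Ebar, Matrix.vecMulVec_apply],
    show Ebar 1 0 = 0 from by norm_num [Ebar, Matrix.vecMulVec_apply],
    show Ebar 1 1 = 0 from by norm_num [Ebar, Matrix.vecMulVec_apply],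
    show Ebar 1 2 = 0 from by norm_num [Ebar, Matrix.vecMulVec_apply],
    show Ebar 2 0 = 0 from by norm_num [Ebar, Matrix.vecMulVec_apply],
    show Ebar 2 1 = 0 from by norm_num [Ebar, Matrix.vecMulVec_apply],
    show Ebar 2 2 = 1 from by norm_num [Ebar, Matrix.vecMulVec_apply, Matrix.cons_val_two,
        Matrix.vecHead, Matrix.vecTail]]
    at e00 e01 e02 e10 e11 e12 e20 e21 e22
  obtain ⟨A00, P00, Q00, B00, nA00, nP00, nQ00, nB00, u1, u2, u3, u4⟩ :=
    sq_decomp (hc 0 0) (hc 0 2) (hc 2 0) (hc 2 2) (by linarith)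
  obtain ⟨A01, P01, Q01, B01, nA01, nP01, nQ01, nB01, u5, u6, u7, u8⟩ :=
    sq_decomp (hc 0 3) (hc 0 1) (hc 2 3) (hc 2 1) (by linarith)
  obtain ⟨A10, P10, Q10, B10, nA10, nP10, nQ10, nB10, u9, u10, u11, u12⟩ :=
    sq_decomp (hc 3 0) (hc 3 2) (hc 1 0) (hc 1 2) (by linarith)
  obtain ⟨A11, P11, Q11, B11, nA11, nP11, nQ11, nB11, u13, u14, u15, u16⟩ :=
    sq_decomp (hc 3 3) (hc 3 1) (hc 1 3) (hc 1 1) (by linarith)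
  obtain ⟨PA00, HA00, HA01, PA01, nPA00, nHA00, nHA01, nPA01, v1, v2, v3, v4⟩ :=
    sq_decomp nA00 nB00 nB01 nA01 (by linarith)
  obtain ⟨PA10, HA10, HA11, PA11, nPA10, nHA10, nHA11, nPA11, v5, v6, v7, v8⟩ :=
    sq_decomp nA10 nB10 nB11 nA11 (by linarith)
  obtain ⟨PB00, GB00, GB01, PB01, nPB00, nGB00, nGB01, nPB01, v9, v10, v11, v12⟩ :=
    sq_decomp nP00 nQ00 nQ10 nP10 (by linarith)
  obtain ⟨PB10, GB10, GB11, PB11, nPB10, nGB10, nGB11, nPB11, v13, v14, v15, v16⟩ :=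
    sq_decomp nP01 nQ01 nQ11 nP11 (by linarith)
  refine ⟨![4*(PA00+PB00), 4*(PA01+PB10), 4*(PA10+PB01), 4*(PA11+PB11),
    4*HA00, 4*HA01, 4*HA10, 4*HA11, 4*GB00, 4*GB01, 4*GB10, 4*GB11], ?_, ?_, ?_⟩
  · intro v
    fin_cases v <;> norm_num <;> linarith
  · simp only [Fin.sum_univ_succ, Finset.univ_unique, Fin.default_eq_zero, Finset.sum_const,
      Finset.card_singleton, one_smul, Matrix.cons_val_zero, Matrix.cons_val_succ,
      Finset.sum_singleton, Fin.sum_univ_zero]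
    norm_num
    linarith
  · intro i j
    fin_cases i <;> fin_cases j <;>
      · simp only [Vm, sigv, Fin.sum_univ_succ, Fin.sum_univ_zero, Fin.sum_univ_four,
          Matrix.cons_val_zero, Matrix.cons_val_one, Matrix.head_cons, Matrix.cons_val_succ,
          Prod.mk.injEq]
        norm_num (config := { decide := true }) [Prod.ext_iff,
          show (⟨0, by omega⟩ : Fin 4) = 0 from rfl, show (⟨1, by omega⟩ : Fin 4) = 1 from rfl,
          show (⟨2, by omega⟩ : Fin 4) = 2 from rfl, show (⟨3, by omega⟩ : Fin 4) = 3 from rfl]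
        linarith

lemma core (m n : ℕ) (hn : 0 < n) (Θ : Fin m → Matrix (Fin 3) (Fin 3) ℝ)
    (hΘ : ∀ x, Θ x ∈ convexHull ℝ (Set.range Omegas))
    (F : Fin n → Matrix (Fin 3) (Fin 3) ℝ)
    (cy : Fin n → Fin 4 → Fin 4 → ℝ) (hcy0 : ∀ y i j, 0 ≤ cy y i j)
    (hcyF : ∀ y, F y = ∑ i, ∑ j, cy y i j • Matrix.vecMulVec (es i) (es j))
    (hsum : ∑ y, F y = Ebar) :
    (Matrix.of fun x y => Matrix.trace ((F y)ᵀ * Θ x)) ∈ C m n 4 := by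
  classical
  -- the total effect coefficients
  set cc : Fin 4 → Fin 4 → ℝ := fun i j => ∑ y, cy y i j with hccdef
  have hcc0 : ∀ i j, 0 ≤ cc i j := fun i j => Finset.sum_nonneg fun y _ => hcy0 y i j
  have hcczero : ∀ i j, cc i j = 0 → ∀ y, cy y i j = 0 := by
    intro i j h y
    have := (Finset.sum_eq_zero_iff_of_nonneg (fun y _ => hcy0 y i j)).mp h
    exact this y (Finset.mem_univ y)
  have hccE : ∑ i : Fin 4, ∑ j : Fin 4, cc i j • Matrix.vecMulVec (es i) (es j) = Ebar := by
    calc ∑ i : Fin 4, ∑ j : Fin 4, cc i j • Matrix.vecMulVec (es i) (es j)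
        = ∑ i : Fin 4, ∑ j : Fin 4, ∑ y, cy y i j • Matrix.vecMulVec (es i) (es j) := by
          simp only [hccdef, Finset.sum_smul]
      _ = ∑ i : Fin 4, ∑ y, ∑ j : Fin 4, cy y i j • Matrix.vecMulVec (es i) (es j) :=
          Finset.sum_congr rfl fun i _ => Finset.sum_comm
      _ = ∑ y, ∑ i : Fin 4, ∑ j : Fin 4, cy y i j • Matrix.vecMulVec (es i) (es j) :=
          Finset.sum_comm
      _ = ∑ y, F y := Finset.sum_congr rfl fun y _ => (hcyF y).symm
      _ = Ebar := hsum
  obtain ⟨w, hw0, hw1, hwc⟩ := decomp cc hcc0 hccE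
  -- Bob's response function
  set y0 : Fin n := ⟨0, hn⟩ with hy0
  set bb : Fin 4 → Fin 4 → Fin n → ℝ := fun i j y =>
    if cc i j = 0 then (if y = y0 then 1 else 0) else cy y i j / cc i j with hbbdef
  have hbb0 : ∀ i j y, 0 ≤ bb i j y := by
    intro i j y
    simp only [hbbdef]
    split_ifs with h h2
    · exact zero_le_one
    · exact le_refl 0
    · exact div_nonneg (hcy0 y i j) (hcc0 i j)
  have hbb1 : ∀ i j, ∑ y, bb i j y = 1 := by
    intro i j
    by_cases h : cc i j = 0
    · simp only [hbbdef, if_pos h]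
      rw [Finset.sum_ite_eq' Finset.univ y0 (fun _ => (1:ℝ))]
      simp
    · simp only [hbbdef, if_neg h]
      rw [← Finset.sum_div]
      exact div_self h
  have hbbc : ∀ i j y, cc i j * bb i j y = cy y i j := by
    intro i j y
    by_cases h : cc i j = 0
    · rw [h, zero_mul, hcczero i j h y]
    · simp only [hbbdef, if_neg h]
      field_simp
  -- Alice's conditional probabilities and Bob's response matrix
  set A : Fin 12 → Fin m → Fin 4 → ℝ := fun v x k =>
    (4⁻¹ : ℝ) * (es (sigv v k).1 ⬝ᵥ (Θ x).mulVec (es (sigv v k).2)) with hAdef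
  set B : Fin 12 → Fin 4 → Fin n → ℝ := fun v k y =>
    bb (sigv v k).1 (sigv v k).2 y with hBdef
  have hA0 : ∀ v x k, 0 ≤ A v x k := fun v x k =>
    mul_nonneg (by norm_num) (quad_nonneg_hull (hΘ x) _ _)
  have hA1 : ∀ v x, ∑ k, A v x k = 1 := by
    intro v x
    calc ∑ k, A v x k
        = ∑ k, Matrix.trace (((4⁻¹ : ℝ) • Matrix.vecMulVec (es (sigv v k).1)
            (es (sigv v k).2))ᵀ * Θ x) := by
          refine Finset.sum_congr rfl fun k _ => ?_
          rw [Matrix.transpose_smul, Matrix.smul_mul, Matrix.trace_smul, trace_vecMulVec,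
            smul_eq_mul, hAdef]
      _ = Matrix.trace ((∑ k : Fin 4, (4⁻¹ : ℝ) • Matrix.vecMulVec (es (sigv v k).1)
            (es (sigv v k).2))ᵀ * Θ x) := by
          rw [Matrix.transpose_sum, Matrix.sum_mul, Matrix.trace_sum]
      _ = Matrix.trace (Ebarᵀ * Θ x) := by rw [sigv_meas v]
      _ = 1 := by
          rw [show Ebar = Matrix.vecMulVec ![0,0,1] ![0,0,1] from rfl, trace_vecMulVec]
          exact ebar_one_hull (hΘ x)
  have hB0 : ∀ v k y, 0 ≤ B v k y := fun v k y => hbb0 _ _ y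
  have hB1 : ∀ v k, ∑ y, B v k y = 1 := fun v k => hbb1 _ _
  -- the key factorization of the correlation
  have hp : ∀ x y, Matrix.trace ((F y)ᵀ * Θ x)
      = ∑ v, w v * ∑ k, A v x k * B v k y := by
    intro x y
    have t1 : Matrix.trace ((F y)ᵀ * Θ x)
        = ∑ i, ∑ j, cy y i j * (es i ⬝ᵥ (Θ x).mulVec (es j)) := by
      rw [hcyF y]
      simp only [Matrix.transpose_sum, Matrix.sum_mul, Matrix.trace_sum, Matrix.transpose_smul,
        Matrix.smul_mul, Matrix.trace_smul, smul_eq_mul, trace_vecMulVec]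
    rw [t1]
    have t2 : ∀ i j, cy y i j * (es i ⬝ᵥ (Θ x).mulVec (es j))
        = ∑ v, (w v * Vm v i j) * (bb i j y * (es i ⬝ᵥ (Θ x).mulVec (es j))) := by
      intro i j
      rw [← Finset.sum_mul, ← hwc i j, ← hbbc i j y]
      ring
    calc ∑ i, ∑ j, cy y i j * (es i ⬝ᵥ (Θ x).mulVec (es j))
        = ∑ i, ∑ j, ∑ v, (w v * Vm v i j) * (bb i j y * (es i ⬝ᵥ (Θ x).mulVec (es j))) :=
          Finset.sum_congr rfl fun i _ => Finset.sum_congr rfl fun j _ => t2 i j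
      _ = ∑ i, ∑ v, ∑ j, (w v * Vm v i j) * (bb i j y * (es i ⬝ᵥ (Θ x).mulVec (es j))) :=
          Finset.sum_congr rfl fun i _ => Finset.sum_comm
      _ = ∑ v, ∑ i, ∑ j, (w v * Vm v i j) * (bb i j y * (es i ⬝ᵥ (Θ x).mulVec (es j))) :=
          Finset.sum_comm
      _ = ∑ v, w v * ∑ i, ∑ j, Vm v i j * (bb i j y * (es i ⬝ᵥ (Θ x).mulVec (es j))) := by
          refine Finset.sum_congr rfl fun v _ => ?_
          rw [Finset.mul_sum]
          refine Finset.sum_congr rfl fun i _ => ?_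
          rw [Finset.mul_sum]
          exact Finset.sum_congr rfl fun j _ => by ring
      _ = ∑ v, w v * ∑ k, A v x k * B v k y := by
          refine Finset.sum_congr rfl fun v _ => ?_
          congr 1
          have := Vm_sum (E := ℝ) v (fun i j => bb i j y * (es i ⬝ᵥ (Θ x).mulVec (es j)))
          simp only [smul_eq_mul] at this
          rw [this]
          exact Finset.sum_congr rfl fun k _ => by rw [hAdef, hBdef]; ring
  -- final convex combination
  set ι := Fin 12 × (Fin m → Fin 4) × (Fin 4 → Fin n) with hι
  set W : ι → ℝ := fun p =>
    w p.1 * ((∏ x, A p.1 x (p.2.1 x)) * (∏ k, B p.1 k (p.2.2 k))) with hWdef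
  set Z : ι → Matrix (Fin m) (Fin n) ℝ := fun p =>
    Matrix.of fun x y => if p.2.2 (p.2.1 x) = y then (1:ℝ) else 0 with hZdef
  have hW0 : ∀ p : ι, 0 ≤ W p := by
    intro p
    refine mul_nonneg (hw0 p.1) (mul_nonneg ?_ ?_)
    · exact Finset.prod_nonneg fun x _ => hA0 _ _ _
    · exact Finset.prod_nonneg fun k _ => hB0 _ _ _
  have sA : ∀ v, ∑ g : Fin m → Fin 4, ∏ x, A v x (g x) = 1 := by
    intro v
    rw [← Fintype.prod_sum (fun x k => A v x k)]
    simp [hA1 v]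
  have sB : ∀ v, ∑ h : Fin 4 → Fin n, ∏ k, B v k (h k) = 1 := by
    intro v
    rw [← Fintype.prod_sum (fun k y => B v k y)]
    simp [hB1 v]
  have hWsum : ∑ p : ι, W p = 1 := by
    rw [Fintype.sum_prod_type]
    calc ∑ v, ∑ q : (Fin m → Fin 4) × (Fin 4 → Fin n), W (v, q)
        = ∑ v, ∑ g : Fin m → Fin 4, ∑ h : Fin 4 → Fin n,
            w v * ((∏ x, A v x (g x)) * (∏ k, B v k (h k))) := by
          refine Finset.sum_congr rfl fun v _ => ?_
          rw [Fintype.sum_prod_type]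
      _ = ∑ v, w v * ((∑ g : Fin m → Fin 4, ∏ x, A v x (g x))
            * (∑ h : Fin 4 → Fin n, ∏ k, B v k (h k))) := by
          refine Finset.sum_congr rfl fun v _ => ?_
          rw [Finset.sum_mul_sum, Finset.mul_sum]
          refine Finset.sum_congr rfl fun g _ => ?_
          rw [Finset.mul_sum]
      _ = ∑ v, w v := by
          refine Finset.sum_congr rfl fun v _ => ?_
          rw [sA v, sB v, one_mul, mul_one]
      _ = 1 := hw1
  have hZV : ∀ p : ι, Z p ∈ V m n 4 := by
    intro p
    refine ⟨?_, ?_, ?_⟩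
    · intro x y
      simp only [hZdef, Matrix.of_apply]
      split_ifs
      · right; rfl
      · left; rfl
    · intro x
      simp only [hZdef, Matrix.of_apply]
      rw [Finset.sum_ite_eq Finset.univ (p.2.2 (p.2.1 x)) (fun _ => (1:ℝ))]
      simp
    · have hsub : {y : Fin n | ∃ x, Z p x y ≠ 0} ⊆ Set.range p.2.2 := by
        rintro y ⟨x, hx⟩
        simp only [hZdef, Matrix.of_apply] at hx
        by_cases h : p.2.2 (p.2.1 x) = y
        · exact ⟨p.2.1 x, h⟩
        · simp [h] at hx
      calc ({y : Fin n | ∃ x, Z p x y ≠ 0}).ncard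
          ≤ (Set.range p.2.2).ncard := Set.ncard_le_ncard hsub (Set.finite_range _)
        _ = (p.2.2 '' Set.univ).ncard := by rw [Set.image_univ]
        _ ≤ (Set.univ : Set (Fin 4)).ncard := Set.ncard_image_le Set.finite_univ
        _ = 4 := by simp [Set.ncard_univ]
  have hmem := Finset.centerMass_mem_convexHull (Finset.univ : Finset ι)
    (fun p _ => hW0 p) (by rw [hWsum]; exact one_pos) (fun p _ => hZV p)
  rw [Finset.centerMass_eq_of_sum_1 _ _ hWsum] at hmem
  have hfinal : (Matrix.of fun x y => Matrix.trace ((F y)ᵀ * Θ x)) = ∑ p : ι, W p • Z p := by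
    ext x y
    rw [Matrix.sum_apply]
    simp only [Matrix.smul_apply, hZdef, Matrix.of_apply, smul_eq_mul]
    symm
    rw [Fintype.sum_prod_type]
    have inner1 : ∀ (v : Fin 12) (g : Fin m → Fin 4),
        ∑ h : Fin 4 → Fin n, W (v, g, h) * (if h (g x) = y then (1:ℝ) else 0)
        = (w v * ∏ x', A v x' (g x')) * B v (g x) y := by
      intro v g
      have e1 : ∀ h : Fin 4 → Fin n, W (v, g, h) * (if h (g x) = y then (1:ℝ) else 0)
          = (w v * ∏ x', A v x' (g x')) * ((∏ k, B v k (h k))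
              * (if h (g x) = y then (1:ℝ) else 0)) := by
        intro h; simp only [hWdef]; ring
      rw [Finset.sum_congr rfl fun h _ => e1 h, ← Finset.mul_sum]
      have e2 : ∀ h : Fin 4 → Fin n, (∏ k, B v k (h k)) * (if h (g x) = y then (1:ℝ) else 0)
          = (∏ k, B v k (h k)) * (fun j => if j = y then (1:ℝ) else 0) (h (g x)) := by
        intro h; rfl
      rw [Finset.sum_congr rfl fun h _ => e2 h,
        marg (B v) (hB1 v) (g x) (fun j => if j = y then (1:ℝ) else 0)]
      congr 1
      simp [mul_ite, mul_one, mul_zero, Finset.sum_ite_eq' Finset.univ y]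
    calc ∑ v, ∑ q : (Fin m → Fin 4) × (Fin 4 → Fin n),
          W (v, q) * (if q.2 (q.1 x) = y then (1:ℝ) else 0)
        = ∑ v, ∑ g : Fin m → Fin 4, ∑ h : Fin 4 → Fin n,
            W (v, g, h) * (if h (g x) = y then (1:ℝ) else 0) := by
          refine Finset.sum_congr rfl fun v _ => ?_
          rw [Fintype.sum_prod_type]
      _ = ∑ v, ∑ g : Fin m → Fin 4, (w v * ∏ x', A v x' (g x')) * B v (g x) y := by
          exact Finset.sum_congr rfl fun v _ =>
            Finset.sum_congr rfl fun g _ => inner1 v g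
      _ = ∑ v, w v * ∑ k, A v x k * B v k y := by
          refine Finset.sum_congr rfl fun v _ => ?_
          have e3 : ∀ g : Fin m → Fin 4, (w v * ∏ x', A v x' (g x')) * B v (g x) y
              = w v * ((∏ x', A v x' (g x')) * (fun k => B v k y) (g x)) := by
            intro g; ring
          rw [Finset.sum_congr rfl fun g _ => e3 g, ← Finset.mul_sum,
            marg (fun x' k => A v x' k) (hA1 v) x (fun k => B v k y)]
      _ = Matrix.trace ((F y)ᵀ * Θ x) := (hp x y).symm
  rw [hfinal]
  exact hmem

/-- The PR Model (all 24 extremal states, but only factorized effects) satisfies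
the no-hypersignaling principle: every correlation it produces lies in `C m n 4`. -/
theorem PR_model_no_hypersignaling (m n : ℕ) (hm : 0 < m) (hn : 0 < n)
    (Θ : Fin m → Matrix (Fin 3) (Fin 3) ℝ)
    (hΘ : ∀ x, Θ x ∈ convexHull ℝ (Set.range Omegas))
    (F : Fin n → Matrix (Fin 3) (Fin 3) ℝ)
    (hF : ∀ y, ∃ c : Fin 4 → Fin 4 → ℝ, (∀ i j, 0 ≤ c i j) ∧
      F y = ∑ i, ∑ j, c i j • Matrix.vecMulVec (es i) (es j))
    (hsum : ∑ y, F y = Ebar) :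
    (Matrix.of fun x y => Matrix.trace ((F y)ᵀ * Θ x)) ∈ C m n 4 := by
  choose cy hcy0 hcyF using hF
  exact core m n hn Θ hΘ F cy hcy0 hcyF hsum
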